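/- Fix an integer i with 1 ≤ i ≤ d−1, and define D_i : M_d(ℂ) → M_{d−1}(ℂ) by D_i(Y) = ∑_{m=0}^{d−1} E_m Y E_m†, where E_m = |m⟩⟨m| for 0 ≤ m ≤ d−2 and E_{d−1} = |i−1⟩⟨d−1| (as (d−1)×d matrices). Then ∑_{m=0}^{d−1} E_m†E_m = I_d (so D_i is a quantum channel), and for every matrix X ∈ M_d(ℂ) with PXP = X, where P = |0⟩⟨0| + |i⟩⟨i|, one has D_i(O(X)) = O^c(X). (Hence the sub-channel of O obtained by restricting the input to span{|0⟩,|i⟩} is degradable, with degrading map D_i.) -/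
import Mathlib

open Matrix ComplexOrder

/-- Von Neumann entropy (base-2) of a matrix: −∑ λᵢ log₂ λᵢ over its eigenvalues
(0 if the matrix is not Hermitian). -/
noncomputable def vnEntropy {n : ℕ} (ρ : Matrix (Fin n) (Fin n) ℂ) : ℝ :=
  if h : ρ.IsHermitian then -∑ i, (h.eigenvalues i) * Real.logb 2 (h.eigenvalues i) else 0

/-- The basis ket |i⟩ of ℂ^d (zero if out of range). -/
noncomputable def bket (d i : ℕ) : Fin d → ℂ := fun p => if (p : ℕ) = i then 1 else 0

/-- The projector |i⟩⟨i| on ℂ^d. -/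
noncomputable def bproj (d i : ℕ) : Matrix (Fin d) (Fin d) ℂ :=
  Matrix.vecMulVec (bket d i) (star (bket d i))

/-- Kraus operator K_k = μ_k|k⟩⟨0| + |d−1⟩⟨k+1| of the channel O. -/
noncomputable def KrO (d : ℕ) (μ : ℕ → ℝ) (k : ℕ) : Matrix (Fin d) (Fin d) ℂ :=
  ((μ k : ℝ) : ℂ) • Matrix.vecMulVec (bket d k) (star (bket d 0)) +
    Matrix.vecMulVec (bket d (d-1)) (star (bket d (k+1)))

/-- The channel O : M_d(ℂ) → M_d(ℂ) with parameters μ₀,…,μ_{d−2}. -/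
noncomputable def chanO (d : ℕ) (μ : ℕ → ℝ) (X : Matrix (Fin d) (Fin d) ℂ) :
    Matrix (Fin d) (Fin d) ℂ :=
  ∑ k ∈ Finset.range (d - 1), KrO d μ k * X * (KrO d μ k)ᴴ

/-- Kraus operator L_j = μ_j|j⟩⟨0| of O^c, for 0 ≤ j ≤ d−2. -/
noncomputable def LrO (d : ℕ) (μ : ℕ → ℝ) (j : ℕ) : Matrix (Fin (d-1)) (Fin d) ℂ :=
  ((μ j : ℝ) : ℂ) • Matrix.vecMulVec (bket (d-1) j) (star (bket d 0))

/-- Kraus operator L_{d−1} = ∑_{i=1}^{d−1}|i−1⟩⟨i| of O^c. -/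
noncomputable def VrO (d : ℕ) : Matrix (Fin (d-1)) (Fin d) ℂ :=
  Matrix.of fun a b => if (b : ℕ) = (a : ℕ) + 1 then 1 else 0

/-- The complementary channel O^c : M_d(ℂ) → M_{d−1}(ℂ). -/
noncomputable def chanOc (d : ℕ) (μ : ℕ → ℝ) (X : Matrix (Fin d) (Fin d) ℂ) :
    Matrix (Fin (d-1)) (Fin (d-1)) ℂ :=
  (∑ j ∈ Finset.range (d - 1), LrO d μ j * X * (LrO d μ j)ᴴ) + VrO d * X * (VrO d)ᴴ

/-- Kraus operator E_m of the degrading map D_i: E_m = |m⟩⟨m| for 0 ≤ m ≤ d−2 and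
E_{d−1} = |i−1⟩⟨d−1| (as (d−1)×d matrices). -/
noncomputable def ErD (d i m : ℕ) : Matrix (Fin (d-1)) (Fin d) ℂ :=
  if m = d - 1 then Matrix.vecMulVec (bket (d-1) (i-1)) (star (bket d (d-1)))
  else Matrix.vecMulVec (bket (d-1) m) (star (bket d m))

/-- The map D_i(Y) = ∑_{m=0}^{d−1} E_m Y E_m†. -/
noncomputable def mapD (d i : ℕ) (Y : Matrix (Fin d) (Fin d) ℂ) :
    Matrix (Fin (d-1)) (Fin (d-1)) ℂ :=
  ∑ m ∈ Finset.range d, ErD d i m * Y * (ErD d i m)ᴴ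

-- Auxiliary lemmas ----------------------------------------------------------

lemma star_bket (n j : ℕ) : star (bket n j) = bket n j := by
  funext p; by_cases h : (p:ℕ) = j <;> simp [bket, h]

lemma sum_univ_ite {n c : ℕ} (hc : c < n) (f : Fin n → ℂ) :
    ∑ p : Fin n, (if (p:ℕ) = c then f p else 0) = f ⟨c, hc⟩ := by
  rw [Finset.sum_eq_single (⟨c, hc⟩ : Fin n)]
  · simp
  · intro p _ hp; rw [if_neg]; intro h; exact hp (Fin.ext h)
  · simp

lemma sum_range_ite {n a : ℕ} (ha : a < n) (f : ℕ → ℂ) :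
    ∑ k ∈ Finset.range n, (if a = k then f k else 0) = f a := by
  rw [Finset.sum_eq_single a]
  · simp
  · intro k _ hk; rw [if_neg (fun h => hk h.symm)]
  · intro h; exact absurd (Finset.mem_range.mpr ha) h

lemma braXket {n m : ℕ} (p q : ℕ) (hp : p < n) (hq : q < m)
    (X : Matrix (Fin n) (Fin m) ℂ) :
    star (bket n p) ⬝ᵥ X *ᵥ bket m q = X ⟨p, hp⟩ ⟨q, hq⟩ := by
  rw [star_bket]
  have h1 : ∀ r : Fin n, (X *ᵥ bket m q) r = X r ⟨q, hq⟩ := by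
    intro r
    simp only [Matrix.mulVec, dotProduct, bket, mul_ite, mul_one, mul_zero]
    exact sum_univ_ite hq _
  simp only [dotProduct, h1, bket, ite_mul, one_mul, zero_mul]
  exact sum_univ_ite hp _

lemma bket_norm {n j : ℕ} (hj : j < n) : star (bket n j) ⬝ᵥ bket n j = 1 := by
  rw [star_bket]
  have h : ∀ p : Fin n, bket n j p * bket n j p = if (p:ℕ) = j then (1:ℂ) else 0 := by
    intro p; by_cases h : (p:ℕ) = j <;> simp [bket, h]
  simp only [dotProduct, h]
  rw [sum_univ_ite hj]

lemma rank1_mul_mul {n m k l : ℕ} (u : Fin n → ℂ) (v : Fin m → ℂ)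
    (X : Matrix (Fin m) (Fin k) ℂ) (z : Fin k → ℂ) (w : Fin l → ℂ) :
    Matrix.vecMulVec u (star v) * X * Matrix.vecMulVec z (star w)
      = (star v ⬝ᵥ X *ᵥ z) • Matrix.vecMulVec u (star w) := by
  ext a b
  simp only [Matrix.mul_apply, Matrix.vecMulVec_apply, Matrix.smul_apply,
    dotProduct, Matrix.mulVec, smul_eq_mul, Pi.star_apply,
    Finset.sum_mul, Finset.mul_sum]
  rw [Finset.sum_comm]
  apply Finset.sum_congr rfl; intro p _
  apply Finset.sum_congr rfl; intro q _
  ring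

lemma rank1_mul {n m k : ℕ} (u : Fin n → ℂ) (v v' : Fin m → ℂ) (w : Fin k → ℂ) :
    Matrix.vecMulVec u (star v) * Matrix.vecMulVec v' (star w)
      = (star v ⬝ᵥ v') • Matrix.vecMulVec u (star w) := by
  ext a b
  simp only [Matrix.mul_apply, Matrix.vecMulVec_apply, Matrix.smul_apply,
    dotProduct, smul_eq_mul, Pi.star_apply, Finset.sum_mul]
  apply Finset.sum_congr rfl; intro p _
  ring

lemma bket_vmv_conjT (n m p q : ℕ) :
    (Matrix.vecMulVec (bket n p) (star (bket m q)))ᴴ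
      = Matrix.vecMulVec (bket m q) (star (bket n p)) := by
  ext a b
  rw [star_bket, star_bket]
  simp only [Matrix.conjTranspose_apply, Matrix.vecMulVec_apply]
  by_cases h1 : (a:ℕ) = q <;> by_cases h2 : (b:ℕ) = p <;> simp [bket, h1, h2]

lemma e_apply {n m : ℕ} (p q : ℕ) (a : Fin n) (b : Fin m) :
    Matrix.vecMulVec (bket n p) (star (bket m q)) a b
      = if (a:ℕ) = p ∧ (b:ℕ) = q then 1 else 0 := by
  rw [star_bket]
  by_cases h1 : (a:ℕ) = p <;> by_cases h2 : (b:ℕ) = q <;>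
    simp [Matrix.vecMulVec_apply, bket, h1, h2]

-- Main theorem ---------------------------------------------------------------

/-- D_i is trace preserving, and it degrades the sub-channel of O with inputs
supported on span{|0⟩,|i⟩}: D_i(O(X)) = O^c(X) for all X = PXP,
P = |0⟩⟨0| + |i⟩⟨i|. -/
theorem stmt15 (d : ℕ) (hd : 3 ≤ d) (μ : ℕ → ℝ)
    (hμ0 : ∀ j < d - 1, 0 ≤ μ j)
    (hμsum : ∑ j ∈ Finset.range (d - 1), (μ j) ^ 2 = 1)
    (i : ℕ) (hi1 : 1 ≤ i) (hi2 : i ≤ d - 1) :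
    (∑ m ∈ Finset.range d, (ErD d i m)ᴴ * ErD d i m) = (1 : Matrix (Fin d) (Fin d) ℂ) ∧
    ∀ X : Matrix (Fin d) (Fin d) ℂ,
      (bproj d 0 + bproj d i) * X * (bproj d 0 + bproj d i) = X →
      mapD d i (chanO d μ X) = chanOc d μ X := by
  have h0d : 0 < d := by omega
  have hdd : d - 1 < d := by omega
  have hi1d : i - 1 < d - 1 := by omega
  have hid : i < d := by omega
  constructor
  · -- trace-preserving part
    have hterm : ∀ m ∈ Finset.range d,
        (ErD d i m)ᴴ * ErD d i m
          = Matrix.vecMulVec (bket d m) (star (bket d m)) := by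
      intro m hm
      rw [Finset.mem_range] at hm
      by_cases hm' : m = d - 1
      · subst hm'
        rw [ErD, if_pos rfl, bket_vmv_conjT, rank1_mul, bket_norm hi1d, one_smul]
      · rw [ErD, if_neg hm', bket_vmv_conjT, rank1_mul,
          bket_norm (show m < d - 1 by omega), one_smul]
    rw [Finset.sum_congr rfl hterm]
    ext a b
    rw [Matrix.sum_apply]
    by_cases hab : a = b
    · subst hab
      have h2 : ∀ m ∈ Finset.range d,
          Matrix.vecMulVec (bket d m) (star (bket d m)) a a
            = if (a:ℕ) = m then (1:ℂ) else 0 := by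
        intro m _; rw [e_apply]; simp
      rw [Finset.sum_congr rfl h2, sum_range_ite a.isLt, Matrix.one_apply_eq]
    · have h2 : ∀ m ∈ Finset.range d,
          Matrix.vecMulVec (bket d m) (star (bket d m)) a b = 0 := by
        intro m _; rw [e_apply, if_neg]
        rintro ⟨h1', h2'⟩; exact hab (Fin.ext (h1'.trans h2'.symm))
      rw [Finset.sum_congr rfl h2, Finset.sum_const_zero, Matrix.one_apply_ne hab]
  · -- degradability part
    intro X hX
    set x : ℕ → ℕ → ℂ := fun p q =>
      X ⟨p % d, Nat.mod_lt _ h0d⟩ ⟨q % d, Nat.mod_lt _ h0d⟩ with hxdef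
    have hxlt : ∀ (p q : ℕ) (hp : p < d) (hq : q < d), x p q = X ⟨p, hp⟩ ⟨q, hq⟩ := by
      intro p q hp hq
      simp only [hxdef]
      rw [show (⟨p % d, Nat.mod_lt _ h0d⟩ : Fin d) = ⟨p, hp⟩ from
        Fin.ext (Nat.mod_eq_of_lt hp)]
      rw [show (⟨q % d, Nat.mod_lt _ h0d⟩ : Fin d) = ⟨q, hq⟩ from
        Fin.ext (Nat.mod_eq_of_lt hq)]
    have hX0 : ∀ (p q : ℕ) (hp : p < d) (hq : q < d),
        (¬(p = 0 ∨ p = i) ∨ ¬(q = 0 ∨ q = i)) → x p q = 0 := by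
      intro p q hp hq hpq
      rw [hxlt p q hp hq]
      conv_lhs => rw [← hX]
      rcases hpq with hp' | hq'
      · push_neg at hp'
        have hrow : ∀ r : Fin d, (bproj d 0 + bproj d i) ⟨p, hp⟩ r = 0 := by
          intro r
          simp [bproj, Matrix.add_apply, e_apply, hp'.1, hp'.2]
        simp [Matrix.mul_apply, hrow]
      · push_neg at hq'
        have hcol : ∀ s : Fin d, (bproj d 0 + bproj d i) s ⟨q, hq⟩ = 0 := by
          intro s
          simp [bproj, Matrix.add_apply, e_apply, hq'.1, hq'.2]
        simp [Matrix.mul_apply, hcol]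
    have hμr : ∀ k, star ((μ k : ℝ) : ℂ) = ((μ k : ℝ) : ℂ) :=
      fun k => Complex.conj_ofReal _
    have hK : ∀ k, k < d - 1 → KrO d μ k * X * (KrO d μ k)ᴴ =
        (((μ k:ℝ):ℂ) * ((μ k:ℝ):ℂ) * x 0 0) •
            Matrix.vecMulVec (bket d k) (star (bket d k))
        + (((μ k:ℝ):ℂ) * x 0 (k+1)) •
            Matrix.vecMulVec (bket d k) (star (bket d (d-1)))
        + (((μ k:ℝ):ℂ) * x (k+1) 0) •
            Matrix.vecMulVec (bket d (d-1)) (star (bket d k))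
        + (x (k+1) (k+1)) •
            Matrix.vecMulVec (bket d (d-1)) (star (bket d (d-1))) := by
      intro k hk
      have hk1 : k + 1 < d := by omega
      rw [KrO, conjTranspose_add, conjTranspose_smul, bket_vmv_conjT, bket_vmv_conjT, hμr]
      simp only [add_mul, mul_add, smul_mul_assoc, mul_smul_comm, smul_smul]
      rw [rank1_mul_mul, rank1_mul_mul, rank1_mul_mul, rank1_mul_mul]
      rw [braXket 0 0 h0d h0d, braXket 0 (k+1) h0d hk1,
          braXket (k+1) 0 hk1 h0d, braXket (k+1) (k+1) hk1 hk1]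
      rw [hxlt 0 0 h0d h0d, hxlt 0 (k+1) h0d hk1,
          hxlt (k+1) 0 hk1 h0d, hxlt (k+1) (k+1) hk1 hk1]
      module
    have hYdiag : ∀ (c : ℕ) (hc : c < d),
        chanO d μ X ⟨c, hc⟩ ⟨c, hc⟩ =
          if c < d - 1 then ((μ c:ℝ):ℂ) * ((μ c:ℝ):ℂ) * x 0 0 else x i i := by
      intro c hc
      rw [chanO, Matrix.sum_apply]
      by_cases hc' : c < d - 1
      · rw [if_pos hc']
        have hterm : ∀ k ∈ Finset.range (d-1),
            (KrO d μ k * X * (KrO d μ k)ᴴ) ⟨c,hc⟩ ⟨c,hc⟩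
              = if c = k then ((μ k:ℝ):ℂ) * ((μ k:ℝ):ℂ) * x 0 0 else 0 := by
          intro k hk
          rw [Finset.mem_range] at hk
          rw [hK k hk]
          have hcd : c ≠ d - 1 := by omega
          simp only [Matrix.add_apply, Matrix.smul_apply, e_apply, smul_eq_mul]
          simp [hcd]
        rw [Finset.sum_congr rfl hterm, sum_range_ite hc']
      · rw [if_neg hc']
        have hc'' : c = d - 1 := by omega
        subst hc''
        have hterm : ∀ k ∈ Finset.range (d-1),
            (KrO d μ k * X * (KrO d μ k)ᴴ) ⟨d-1,hc⟩ ⟨d-1,hc⟩ = x (k+1) (k+1) := by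
          intro k hk
          rw [Finset.mem_range] at hk
          rw [hK k hk]
          have hkd : d - 1 ≠ k := by omega
          simp only [Matrix.add_apply, Matrix.smul_apply, e_apply, smul_eq_mul]
          simp [hkd]
        rw [Finset.sum_congr rfl hterm]
        rw [Finset.sum_eq_single (i-1)]
        · rw [show i - 1 + 1 = i by omega]
        · intro k hk hki
          rw [Finset.mem_range] at hk
          apply hX0 (k+1) (k+1) (by omega) (by omega)
          left; push_neg; constructor <;> omega
        · intro h; exact absurd (Finset.mem_range.mpr (by omega)) h
    ext a b
    have ha1 : (a:ℕ) < d - 1 := a.isLt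
    have hb1 : (b:ℕ) < d - 1 := b.isLt
    have hV : (VrO d * X * (VrO d)ᴴ) a b = x ((a:ℕ)+1) ((b:ℕ)+1) := by
      have ha : (a:ℕ)+1 < d := by omega
      have hb : (b:ℕ)+1 < d := by omega
      rw [hxlt _ _ ha hb]
      simp only [Matrix.mul_apply, Matrix.conjTranspose_apply, VrO, Matrix.of_apply]
      have h1 : ∀ q : Fin d,
          (∑ p : Fin d, (if (p:ℕ) = (a:ℕ)+1 then (1:ℂ) else 0) * X p q)
            = X ⟨(a:ℕ)+1, ha⟩ q := by
        intro q
        simp only [ite_mul, one_mul, zero_mul]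
        exact sum_univ_ite ha _
      rw [Finset.sum_congr rfl (fun q _ => by rw [h1 q])]
      have h2 : ∀ q : Fin d,
          X ⟨(a:ℕ)+1, ha⟩ q * star (if (q:ℕ) = (b:ℕ)+1 then (1:ℂ) else 0)
            = if (q:ℕ) = (b:ℕ)+1 then X ⟨(a:ℕ)+1, ha⟩ q else 0 := by
        intro q; by_cases h : (q:ℕ) = (b:ℕ)+1 <;> simp [h]
      rw [Finset.sum_congr rfl (fun q _ => h2 q)]
      exact sum_univ_ite hb _
    rw [mapD, chanOc, Matrix.sum_apply, Matrix.add_apply, Matrix.sum_apply]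
    have hL : ∀ m ∈ Finset.range d,
        (ErD d i m * chanO d μ X * (ErD d i m)ᴴ) a b =
          if m = d - 1 then (if (a:ℕ) = i-1 ∧ (b:ℕ) = i-1 then x i i else 0)
          else (if (a:ℕ) = m ∧ (b:ℕ) = m then ((μ m:ℝ):ℂ)*((μ m:ℝ):ℂ)*x 0 0 else 0) := by
      intro m hm
      rw [Finset.mem_range] at hm
      by_cases hm' : m = d - 1
      · subst hm'
        rw [if_pos rfl, ErD, if_pos rfl, bket_vmv_conjT, rank1_mul_mul,
            braXket (d-1) (d-1) hdd hdd, hYdiag (d-1) hdd,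
            if_neg (by omega), Matrix.smul_apply, e_apply, smul_eq_mul]
        by_cases h : (a:ℕ) = i-1 ∧ (b:ℕ) = i-1 <;> simp [h]
      · rw [if_neg hm', ErD, if_neg hm', bket_vmv_conjT, rank1_mul_mul,
            braXket m m (by omega) (by omega), hYdiag m (by omega),
            if_pos (by omega), Matrix.smul_apply, e_apply, smul_eq_mul]
        by_cases h : (a:ℕ) = m ∧ (b:ℕ) = m <;> simp [h]
    rw [Finset.sum_congr rfl hL]
    have hR : ∀ j ∈ Finset.range (d-1),
        (LrO d μ j * X * (LrO d μ j)ᴴ) a b =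
          if (a:ℕ) = j ∧ (b:ℕ) = j then ((μ j:ℝ):ℂ)*((μ j:ℝ):ℂ)*x 0 0 else 0 := by
      intro j hj
      rw [Finset.mem_range] at hj
      rw [LrO, conjTranspose_smul, bket_vmv_conjT, hμr]
      rw [Matrix.smul_mul, Matrix.smul_mul, Matrix.mul_smul, smul_smul]
      rw [rank1_mul_mul, braXket 0 0 h0d h0d, ← hxlt 0 0 h0d h0d]
      simp only [Matrix.smul_apply, e_apply, smul_eq_mul]
      by_cases h : (a:ℕ) = j ∧ (b:ℕ) = j <;> simp [h] <;> ring
    rw [Finset.sum_congr rfl hR, hV]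
    have hsplit : Finset.range d = Finset.range ((d-1)+1) := by
      congr 1; omega
    rw [hsplit, Finset.sum_range_succ, if_pos rfl]
    have hmain : ∀ m ∈ Finset.range (d-1),
        (if m = d - 1 then (if (a:ℕ) = i-1 ∧ (b:ℕ) = i-1 then x i i else 0)
          else (if (a:ℕ) = m ∧ (b:ℕ) = m then ((μ m:ℝ):ℂ)*((μ m:ℝ):ℂ)*x 0 0 else 0))
        = (if (a:ℕ) = m ∧ (b:ℕ) = m then ((μ m:ℝ):ℂ)*((μ m:ℝ):ℂ)*x 0 0 else 0) := by
      intro m hm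
      rw [Finset.mem_range] at hm
      rw [if_neg (by omega)]
    rw [Finset.sum_congr rfl hmain]
    congr 1
    by_cases h : (a:ℕ) = i-1 ∧ (b:ℕ) = i-1
    · rw [if_pos h, show (a:ℕ)+1 = i by omega, show (b:ℕ)+1 = i by omega]
    · rw [if_neg h]
      symm
      apply hX0 _ _ (by omega) (by omega)
      rcases not_and_or.mp h with h' | h'
      · left; push_neg; constructor <;> omega
      · right; push_neg; constructor <;> omega
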